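/- Let C be a rank metric code in GF(q)^{m×n} with minimum rank distance d, let C be a codeword, and let W be a w-dimensional subspace of GF(q)^n with w ≥ d. Then the number of codewords D ∈ C such that the row space of D−C equals W is at most α(m, w−d+1) = ∏_{i=0}^{w−d}(q^m − q^i). -/

import Mathlib

/-- `galpha q m u = ∏_{i=0}^{u-1} (q^m - q^i)`. -/
def galpha (q m u : ℕ) : ℕ := ∏ i ∈ Finset.range u, (q ^ m - q ^ i)

/-- The row space of a matrix: the span of its rows. -/
def rowSpace {F : Type} [Field F] {m n : ℕ} (A : Matrix (Fin m) (Fin n) F) :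
    Submodule F (Fin n → F) :=
  Submodule.span F (Set.range fun i => A i)

theorem stmt18 (F : Type) [Field F] [Fintype F] (m n d w : ℕ)
    (𝒞 : Set (Matrix (Fin m) (Fin n) F))
    (hmin : sInf {e : ℕ | ∃ X ∈ 𝒞, ∃ Y ∈ 𝒞, X ≠ Y ∧ (X - Y).rank = e} = d)
    (hnontriv : ∃ X ∈ 𝒞, ∃ Y ∈ 𝒞, X ≠ Y)
    (C : Matrix (Fin m) (Fin n) F) (hC : C ∈ 𝒞)
    (W : Submodule F (Fin n → F)) (hW : Module.finrank F ↥W = w) (hwd : d ≤ w) :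
    Nat.card {D : Matrix (Fin m) (Fin n) F // D ∈ 𝒞 ∧ rowSpace (D - C) = W} ≤
      galpha (Fintype.card F) m (w - d + 1) := by
  classical
  -- the minimum distance bounds all pairwise distances
  have hdle : ∀ A ∈ 𝒞, ∀ B ∈ 𝒞, A ≠ B → d ≤ (A - B).rank := by
    intro A hA B hB hAB
    rw [← hmin]
    exact Nat.sInf_le ⟨A, hA, B, hB, hAB, rfl⟩
  -- d is positive
  have hd1 : 1 ≤ d := by
    rcases Nat.eq_zero_or_pos d with h0 | h
    · exfalso
      have hmem : d ∈ {e : ℕ | ∃ X ∈ 𝒞, ∃ Y ∈ 𝒞, X ≠ Y ∧ (X - Y).rank = e} := by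
        rw [← hmin]
        obtain ⟨X, hX, Y, hY, hXY⟩ := hnontriv
        exact Nat.sInf_mem ⟨(X - Y).rank, X, hX, Y, hY, hXY, rfl⟩
      obtain ⟨A, hA, B, hB, hAB, hr⟩ := hmem
      apply hAB
      have hz : Submodule.span F (Set.range (A - B)) = ⊥ := by
        apply Submodule.finrank_eq_zero.mp
        rw [show Module.finrank F ↥(Submodule.span F (Set.range (A - B))) = (A - B).rank from
          (Matrix.rank_eq_finrank_span_row (A - B)).symm, hr, h0]
      have hAB0 : A - B = 0 := by
        funext i j
        have hmem' : (A - B) i ∈ Submodule.span F (Set.range (A - B)) :=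
          Submodule.subset_span ⟨i, rfl⟩
        rw [hz, Submodule.mem_bot] at hmem'
        simpa using congrFun hmem' j
      exact sub_eq_zero.mp hAB0
    · exact h
  set u := w - d + 1 with hu
  have huw : u ≤ w := by omega
  by_cases hS : Nonempty {D : Matrix (Fin m) (Fin n) F // D ∈ 𝒞 ∧ rowSpace (D - C) = W}
  swap
  · rw [not_nonempty_iff] at hS
    rw [Nat.card_of_isEmpty]
    exact Nat.zero_le _
  -- a basis of W
  let b : Module.Basis (Fin w) F W := Module.finBasisOfFinrankEq F (↥W) hW
  -- rows of D - C lie in W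
  have hrow : ∀ (D : {D : Matrix (Fin m) (Fin n) F // D ∈ 𝒞 ∧ rowSpace (D - C) = W})
      (i : Fin m), (D.1 - C) i ∈ W := by
    intro D i
    have h := D.2.2
    have hmem : (D.1 - C) i ∈ rowSpace (D.1 - C) := Submodule.subset_span ⟨i, rfl⟩
    rwa [h] at hmem
  let r : {D : Matrix (Fin m) (Fin n) F // D ∈ 𝒞 ∧ rowSpace (D - C) = W} → Fin m → W :=
    fun D i => ⟨(D.1 - C) i, hrow D i⟩
  let coordM : {D : Matrix (Fin m) (Fin n) F // D ∈ 𝒞 ∧ rowSpace (D - C) = W} →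
      Fin m → Fin w → F := fun D i k => b.repr (r D i) k
  -- the rows span W
  have hspan : ∀ D, Submodule.span F (Set.range (r D)) = ⊤ := by
    intro D
    apply Submodule.map_injective_of_injective W.injective_subtype
    rw [Submodule.map_span, Submodule.map_top, Submodule.range_subtype]
    have himg : W.subtype '' Set.range (r D) = Set.range fun i => (D.1 - C) i := by
      ext x
      constructor
      · rintro ⟨y, ⟨i, rfl⟩, rfl⟩
        exact ⟨i, rfl⟩
      · rintro ⟨i, rfl⟩
        exact ⟨r D i, ⟨i, rfl⟩, rfl⟩
    rw [himg]
    exact D.2.2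
  -- key lemma: a functional vanishing on all rows is zero
  have keyB : ∀ D (c : Fin w → F), (∀ i, ∑ k, c k * coordM D i k = 0) → c = 0 := by
    intro D c hc
    set ℓ : W →ₗ[F] F := ∑ k, c k • b.coord k with hℓ
    have hker : ∀ x : W, ℓ x = 0 := by
      have hle : Submodule.span F (Set.range (r D)) ≤ LinearMap.ker ℓ := by
        rw [Submodule.span_le]
        rintro x ⟨i, rfl⟩
        simp only [SetLike.mem_coe, LinearMap.mem_ker, hℓ, LinearMap.sum_apply,
          LinearMap.smul_apply, Module.Basis.coord_apply, smul_eq_mul]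
        exact hc i
      intro x
      have hx : x ∈ LinearMap.ker ℓ := hle (by rw [hspan D]; trivial)
      exact hx
    funext k
    have hk := hker (b k)
    simp only [hℓ, LinearMap.sum_apply, LinearMap.smul_apply, Module.Basis.coord_apply,
      Module.Basis.repr_self, smul_eq_mul] at hk
    rw [Finset.sum_eq_single k] at hk
    · simpa using hk
    · intro j _ hj
      simp [Finsupp.single_apply, hj.symm]
    · intro hk'
      exact absurd (Finset.mem_univ k) hk'
  -- the columns of the coordinate matrix are linearly independent
  have hindep : ∀ D, LinearIndependent F (fun k : Fin w => fun i : Fin m => coordM D i k) := by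
    intro D
    rw [Fintype.linearIndependent_iff]
    intro g hg k
    have hsum : ∀ i, ∑ k, g k * coordM D i k = 0 := by
      intro i
      have := congrFun hg i
      simpa [Finset.sum_apply] using this
    exact congrFun (keyB D g hsum) k
  obtain ⟨D₀⟩ := hS
  have hwm : w ≤ m := by
    have h := (hindep D₀).fintype_card_le_finrank
    simpa using h
  have hum : u ≤ m := le_trans huw hwm
  -- the injection
  let φ : {D : Matrix (Fin m) (Fin n) F // D ∈ 𝒞 ∧ rowSpace (D - C) = W} →
      {v : Fin u → (Fin m → F) // LinearIndependent F v} :=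
    fun D => ⟨fun j i => coordM D i (Fin.castLE huw j),
      (hindep D).comp (Fin.castLE huw) (Fin.castLE_injective huw)⟩
  have hφinj : Function.Injective φ := by
    intro D D' hEq
    by_contra hne
    have hne' : D.1 ≠ D'.1 := fun h => hne (Subtype.ext h)
    have hrk : d ≤ (D.1 - D'.1).rank := hdle _ D.2.1 _ D'.2.1 hne'
    have hco : ∀ (i : Fin m) (j : Fin u),
        coordM D i (Fin.castLE huw j) = coordM D' i (Fin.castLE huw j) := by
      intro i j
      have h := congrArg Subtype.val hEq
      exact congrFun (congrFun h j) i
    -- rows of D - D' lie in the span of the last d-1 basis vectors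
    let g : Fin (w - u) → (Fin n → F) := fun t => ((b ⟨u + t.1, by omega⟩ : W) : Fin n → F)
    have hrows : ∀ i, (D.1 - D'.1) i ∈ Submodule.span F (Set.range g) := by
      intro i
      have hD : (D.1 - C) i = ∑ k : Fin w, coordM D i k • ((b k : W) : Fin n → F) := by
        have h1 := b.sum_repr (r D i)
        have h2 := congrArg W.subtype h1
        simp only [map_sum, map_smul, Submodule.coe_subtype] at h2
        exact h2.symm
      have hD' : (D'.1 - C) i = ∑ k : Fin w, coordM D' i k • ((b k : W) : Fin n → F) := by
        have h1 := b.sum_repr (r D' i)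
        have h2 := congrArg W.subtype h1
        simp only [map_sum, map_smul, Submodule.coe_subtype] at h2
        exact h2.symm
      have hall : (D.1 - D'.1) i
          = ∑ k : Fin w, (coordM D i k - coordM D' i k) • ((b k : W) : Fin n → F) := by
        have hsplit : (D.1 - D'.1) i = (D.1 - C) i - (D'.1 - C) i := by
          funext j; simp [Matrix.sub_apply]
        rw [hsplit, hD, hD', ← Finset.sum_sub_distrib]
        congr 1
        funext k
        rw [sub_smul]
      rw [hall]
      apply Submodule.sum_mem
      intro k _
      by_cases hk : (k : ℕ) < u
      · have hkc : Fin.castLE huw ⟨(k : ℕ), hk⟩ = k := by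
          apply Fin.ext; rfl
        have hzero : coordM D i k - coordM D' i k = 0 := by
          have := hco i ⟨(k : ℕ), hk⟩
          rw [hkc] at this
          exact sub_eq_zero.mpr this
        rw [hzero, zero_smul]
        exact Submodule.zero_mem _
      · have hk' : (k : ℕ) - u < w - u := by omega
        have hkg : ((b k : W) : Fin n → F) = g ⟨(k : ℕ) - u, hk'⟩ := by
          exact congrArg (fun x => ((b x : W) : Fin n → F))
            (by apply Fin.ext; show (k : ℕ) = u + ((k : ℕ) - u); omega)
        rw [hkg]
        exact Submodule.smul_mem _ _ (Submodule.subset_span ⟨_, rfl⟩)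
    -- hence the rank of D - D' is at most d - 1
    have hrank_le : (D.1 - D'.1).rank ≤ w - u := by
      rw [show (D.1 - D'.1).rank = Module.finrank F (Submodule.span F (Set.range (D.1 - D'.1))) from
        Matrix.rank_eq_finrank_span_row _]
      have h1 : Submodule.span F (Set.range (D.1 - D'.1)) ≤ Submodule.span F (Set.range g) := by
        rw [Submodule.span_le]
        rintro x ⟨i, rfl⟩
        exact hrows i
      calc Module.finrank F (Submodule.span F (Set.range (D.1 - D'.1)))
          ≤ Module.finrank F (Submodule.span F (Set.range g)) := Submodule.finrank_mono h1
        _ ≤ (Set.range g).toFinset.card := finrank_span_le_card _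
        _ ≤ w - u := by
            rw [Set.toFinset_range]
            exact le_trans Finset.card_image_le (by simp)
    omega
  calc Nat.card {D : Matrix (Fin m) (Fin n) F // D ∈ 𝒞 ∧ rowSpace (D - C) = W}
      ≤ Nat.card {v : Fin u → (Fin m → F) // LinearIndependent F v} :=
        Nat.card_le_card_of_injective φ hφinj
    _ = ∏ i : Fin u, (Fintype.card F ^ m - Fintype.card F ^ (i : ℕ)) := by
        have hfr : Module.finrank F (Fin m → F) = m := Module.finrank_fin_fun F
        rw [card_linearIndependent (by rw [hfr]; exact hum)]
        simp [hfr]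
    _ = galpha (Fintype.card F) m u := by
        rw [galpha, ← Fin.prod_univ_eq_prod_range]
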